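/- arXiv:2505.19302 — 2 statements merged into one kernel-verified Lean document; each statement's English description precedes it below -/
import Mathlib

section
/- Let s_1, ..., s_n, s_{n+1} be exchangeable real-valued random variables (i.i.d. suffices). Define the threshold ŝ as the ⌈(n+1)(1−α)⌉/n-th empirical quantile of {s_1, ..., s_n}. Then P(s_{n+1} ≤ ŝ) ≥ 1 − α. -/
open MeasureTheory ProbabilityTheory
open scoped ENNReal

open Finset in
lemma conformal_count_reindex {m : ℕ} (x : Fin m → ℝ) (τ : Equiv.Perm (Fin m)) (t : ℝ) :
    (univ.filter (fun i => x (τ i) < t)).card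
      = (univ.filter (fun i => x i < t)).card := by
  apply Finset.card_bij (fun i _ => τ i)
  · intro a ha
    simp only [mem_filter, mem_univ, true_and] at ha ⊢
    exact ha
  · intro a _ b _ h
    exact τ.injective h
  · intro b hb
    simp only [mem_filter, mem_univ, true_and] at hb
    exact ⟨τ.symm b, by simpa using hb, by simp⟩

open Finset in
lemma conformal_count_rank {m k : ℕ} (hk : k ≤ m) (x : Fin m → ℝ) :
    k ≤ (univ.filter (fun j : Fin m =>
        (univ.filter (fun i : Fin m => x i < x j)).card < k)).card := by
  set σ := Tuple.sort x with hσ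
  have hmono := Tuple.monotone_sort x
  have key : ∀ p : Fin m, (univ.filter (fun i => x i < x (σ p))).card ≤ p.val := by
    intro p
    have h1 : (univ.filter (fun i => x i < x (σ p))).card ≤ (Finset.Iio p).card := by
      apply Finset.card_le_card_of_injOn (fun i => σ.symm i)
      · intro i hi
        simp only [mem_coe, mem_filter, mem_univ, true_and] at hi
        simp only [mem_coe, Finset.mem_Iio]
        by_contra h
        push_neg at h
        have h2 : (x ∘ σ) p ≤ (x ∘ σ) (σ.symm i) := hmono h
        simp only [Function.comp_apply, Equiv.apply_symm_apply] at h2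
        exact absurd hi (not_lt.2 h2)
      · exact fun a _ b _ h => σ.symm.injective h
    simpa [Fin.card_Iio] using h1
  calc k = (univ : Finset (Fin k)).card := by simp
  _ ≤ _ := by
      apply Finset.card_le_card_of_injOn (fun j : Fin k => σ (Fin.castLE hk j))
      · intro j _
        simp only [mem_coe, mem_filter, mem_univ, true_and]
        exact lt_of_le_of_lt (c := k) (key (Fin.castLE hk j)) (by simp)
      · intro a _ b _ h
        exact Fin.castLE_injective hk (σ.injective h)

/-- **Conformal prediction coverage guarantee.**
Scores `s 0, ..., s n` (the first `n` being calibration scores, `s (Fin.last n)` the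
test score) are i.i.d. real random variables with common law `μ`.  With
`k = ⌈(n+1)(1-α)⌉` and the threshold `ŝ` defined as the `k/n`-th empirical quantile of
the calibration scores (the smallest real `t` such that at least `k` of the `n`
calibration scores are `≤ t`), we have `P(s_{n+1} ≤ ŝ) ≥ 1 - α`. -/
theorem conformal_coverage
    {Ω : Type*} [MeasureSpace Ω] [IsProbabilityMeasure (ℙ : Measure Ω)]
    (n : ℕ) (hn : 0 < n) (α : ℝ) (hα : α ∈ Set.Ioo (0 : ℝ) 1)
    (s : Fin (n + 1) → Ω → ℝ) (hmeas : ∀ i, Measurable (s i))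
    (μ : Measure ℝ)
    (hindep : iIndepFun s ℙ)
    (hident : ∀ i, Measure.map (s i) ℙ = μ)
    (k : ℕ) (hk : (k : ℤ) = ⌈((n : ℝ) + 1) * (1 - α)⌉) (hkn : k ≤ n)
    (shat : Ω → ℝ)
    (hshat : ∀ ω, shat ω =
      sInf {t : ℝ | k ≤ (Finset.univ.filter
        (fun i : Fin n => s i.castSucc ω ≤ t)).card}) :
    1 - α ≤ (ℙ {ω | s (Fin.last n) ω ≤ shat ω}).toReal := by
  classical
  -- common law is a probability measure
  haveI hμprob : IsProbabilityMeasure μ := by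
    constructor
    rw [← hident 0, Measure.map_apply (hmeas 0) MeasurableSet.univ]
    simp
  -- joint random vector and product measure
  set X : Ω → (Fin (n + 1) → ℝ) := fun ω i => s i ω with hXdef
  have hX : Measurable X := measurable_pi_lambda _ hmeas
  set π : Measure (Fin (n + 1) → ℝ) := Measure.pi (fun _ => μ) with hπdef
  haveI : ∀ i : Fin (n + 1), SigmaFinite ((fun _ : Fin (n + 1) => μ) i) :=
    fun _ => inferInstance
  haveI : IsProbabilityMeasure π := by rw [hπdef]; infer_instance
  have hmap : Measure.map X ℙ = π := by
    rw [hπdef]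
    refine (Measure.pi_eq (μ := fun _ : Fin (n + 1) => μ) fun A hA => ?_).symm
    rw [Measure.map_apply hX (MeasurableSet.univ_pi hA)]
    have hpre : X ⁻¹' Set.pi Set.univ A = ⋂ i ∈ Finset.univ, s i ⁻¹' A i := by
      ext ω
      constructor
      · intro h
        exact Set.mem_iInter₂.2 fun i _ => h i trivial
      · intro h i _
        exact Set.mem_iInter₂.1 h i (Finset.mem_univ i)
    rw [hpre, hindep.measure_inter_preimage_eq_mul Finset.univ (fun i _ => hA i)]
    refine Finset.prod_congr rfl fun i _ => ?_
    rw [← hident i, Measure.map_apply (hmeas i) (hA i)]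
  -- rank counting function and events
  set c : Fin (n + 1) → (Fin (n + 1) → ℝ) → ℕ :=
    fun j x => (Finset.univ.filter (fun i => x i < x j)).card with hcdef
  have hcmeas : ∀ j, Measurable (c j) := by
    intro j
    have hrep : c j = fun x => ∑ i : Fin (n + 1), if x i < x j then 1 else 0 := by
      funext x
      exact Finset.card_filter _ _
    rw [hrep]
    exact Finset.measurable_sum _ fun i _ =>
      Measurable.ite (measurableSet_lt (measurable_pi_apply i) (measurable_pi_apply j))
        measurable_const measurable_const
  set A : Fin (n + 1) → Set (Fin (n + 1) → ℝ) := fun j => {x | c j x < k} with hAdef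
  have hAmeas : ∀ j, MeasurableSet (A j) := fun j =>
    (hcmeas j) ((Set.to_countable (Set.Iio k)).measurableSet)
  -- exchangeability: all events have the same probability
  have hexch : ∀ j, π (A j) = π (A (Fin.last n)) := by
    intro j
    set τ : Equiv.Perm (Fin (n + 1)) := Equiv.swap j (Fin.last n) with hτdef
    have mp : MeasurePreserving
        (MeasurableEquiv.piCongrLeft (fun _ => ℝ) τ) π π :=
      measurePreserving_piCongrLeft (fun _ => μ) τ
    have happ : ∀ (x : Fin (n + 1) → ℝ) (b : Fin (n + 1)),
        (MeasurableEquiv.piCongrLeft (fun _ => ℝ) τ) x b = x (τ.symm b) := by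
      intro x b
      have : b = τ (τ.symm b) := (τ.apply_symm_apply b).symm
      rw [this]
      simp only [Equiv.symm_apply_apply]
      exact MeasurableEquiv.piCongrLeft_apply_apply (β := fun _ => ℝ) τ x (τ.symm b)
    have hpre : (MeasurableEquiv.piCongrLeft (fun _ => ℝ) τ) ⁻¹' (A j)
        = A (Fin.last n) := by
      ext x
      simp only [Set.mem_preimage, hAdef, Set.mem_setOf_eq, hcdef]
      have hx : ∀ i, (MeasurableEquiv.piCongrLeft (fun _ => ℝ) τ) x i = x (τ.symm i) :=
        happ x
      have h1 : (Finset.univ.filter (fun i =>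
          (MeasurableEquiv.piCongrLeft (fun _ => ℝ) τ) x i
            < (MeasurableEquiv.piCongrLeft (fun _ => ℝ) τ) x j)).card
          = (Finset.univ.filter (fun i => x (τ.symm i) < x (τ.symm j))).card := by
        congr 1
        apply Finset.filter_congr
        intro i _
        rw [hx i, hx j]
      rw [h1, conformal_count_reindex x τ.symm (x (τ.symm j))]
      have h2 : τ.symm j = Fin.last n := by
        rw [hτdef, Equiv.symm_swap, Equiv.swap_apply_left]
      rw [h2]
    calc π (A j) = (Measure.map (MeasurableEquiv.piCongrLeft (fun _ => ℝ) τ) π) (A j) := by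
          rw [mp.map_eq]
    _ = π ((MeasurableEquiv.piCongrLeft (fun _ => ℝ) τ) ⁻¹' (A j)) :=
          Measure.map_apply (MeasurableEquiv.piCongrLeft (fun _ => ℝ) τ).measurable (hAmeas j)
    _ = π (A (Fin.last n)) := by rw [hpre]
  -- counting argument: k ≤ (n+1) * π (A last)
  have hknp1 : k ≤ n + 1 := hkn.trans (Nat.le_succ n)
  have hptwise : ∀ x, (k : ℝ≥0∞) ≤ ∑ j : Fin (n + 1), (A j).indicator 1 x := by
    intro x
    have hcard := conformal_count_rank hknp1 x
    calc (k : ℝ≥0∞)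
        ≤ ((Finset.univ.filter (fun j : Fin (n + 1) =>
            (Finset.univ.filter (fun i => x i < x j)).card < k)).card : ℝ≥0∞) := by
          exact_mod_cast hcard
    _ = ∑ j : Fin (n + 1), if (Finset.univ.filter (fun i => x i < x j)).card < k
          then (1 : ℝ≥0∞) else 0 := by
          rw [Finset.sum_boole]
    _ = ∑ j : Fin (n + 1), (A j).indicator 1 x := by
          refine Finset.sum_congr rfl fun j _ => ?_
          simp [Set.indicator_apply, hAdef, hcdef]
  have hcount : (k : ℝ≥0∞) ≤ (n + 1 : ℕ) * π (A (Fin.last n)) := by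
    have h1 : (k : ℝ≥0∞) ≤ ∑ j : Fin (n + 1), π (A j) := by
      calc (k : ℝ≥0∞) = ∫⁻ _, (k : ℝ≥0∞) ∂π := by simp
      _ ≤ ∫⁻ x, ∑ j : Fin (n + 1), (A j).indicator 1 x ∂π := lintegral_mono hptwise
      _ = ∑ j : Fin (n + 1), ∫⁻ x, (A j).indicator 1 x ∂π :=
            lintegral_finset_sum _ fun j _ => measurable_one.indicator (hAmeas j)
      _ = ∑ j : Fin (n + 1), π (A j) := by
            refine Finset.sum_congr rfl fun j _ => ?_
            rw [lintegral_indicator_one (hAmeas j)]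
    have h2 : ∑ j : Fin (n + 1), π (A j) = (n + 1 : ℕ) * π (A (Fin.last n)) := by
      rw [Finset.sum_congr rfl fun j _ => hexch j, Finset.sum_const, Finset.card_univ,
        Fintype.card_fin, nsmul_eq_mul]
    exact h1.trans_eq h2
  -- the event inclusion
  have hsub : X ⁻¹' (A (Fin.last n)) ⊆ {ω | s (Fin.last n) ω ≤ shat ω} := by
    intro ω hω
    simp only [Set.mem_preimage, hAdef, Set.mem_setOf_eq, hcdef, hXdef] at hω
    -- hω : card {i : Fin (n+1) | s i ω < s last ω} < k
    simp only [Set.mem_setOf_eq]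
    rw [hshat ω]
    set T : Set ℝ := {t : ℝ | k ≤ (Finset.univ.filter
        (fun i : Fin n => s i.castSucc ω ≤ t)).card} with hTdef
    have hne : T.Nonempty := by
      haveI : Nonempty (Fin n) := ⟨⟨0, hn⟩⟩
      refine ⟨(Finset.univ : Finset (Fin n)).sup' Finset.univ_nonempty (fun i => s i.castSucc ω), ?_⟩
      simp only [hTdef, Set.mem_setOf_eq]
      have : Finset.univ.filter (fun i : Fin n =>
          s i.castSucc ω ≤ (Finset.univ : Finset (Fin n)).sup' Finset.univ_nonempty
            (fun i => s i.castSucc ω)) = Finset.univ := by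
        refine Finset.filter_true_of_mem fun i _ => ?_
        exact Finset.le_sup' (fun i : Fin n => s i.castSucc ω) (Finset.mem_univ i)
      rw [this]
      simpa using hkn
    refine le_csInf hne ?_
    intro t ht
    by_contra hlt
    push_neg at hlt
    simp only [hTdef, Set.mem_setOf_eq] at ht
    have hle : (Finset.univ.filter (fun i : Fin n => s i.castSucc ω ≤ t)).card
        ≤ (Finset.univ.filter (fun i : Fin (n + 1) => s i ω < s (Fin.last n) ω)).card := by
      apply Finset.card_le_card_of_injOn (fun i => Fin.castSucc i)
      · intro i hi
        simp only [Finset.mem_coe, Finset.mem_filter, Finset.mem_univ, true_and] at hi ⊢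
        exact lt_of_le_of_lt hi hlt
      · exact fun a _ b _ h => Fin.castSucc_injective n h
    omega
  -- putting it together
  have hπE : π (A (Fin.last n)) ≤ ℙ {ω | s (Fin.last n) ω ≤ shat ω} := by
    have : π (A (Fin.last n)) = ℙ (X ⁻¹' (A (Fin.last n))) := by
      rw [← hmap, Measure.map_apply hX (hAmeas (Fin.last n))]
    rw [this]
    exact measure_mono hsub
  -- real arithmetic
  have hkreal : ((n : ℝ) + 1) * (1 - α) ≤ (k : ℝ) := by
    have h1 := Int.le_ceil (((n : ℝ) + 1) * (1 - α))
    rw [← hk] at h1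
    exact_mod_cast h1
  set P : ℝ≥0∞ := π (A (Fin.last n)) with hPdef
  have hPle1 : P ≤ 1 := prob_le_one
  have hPfin : P ≠ ⊤ := (hPle1.trans_lt ENNReal.one_lt_top).ne
  have hmulfin : ((n + 1 : ℕ) : ℝ≥0∞) * P ≠ ⊤ :=
    ENNReal.mul_ne_top (ENNReal.natCast_ne_top _) hPfin
  have hkP : (k : ℝ) ≤ ((n : ℝ) + 1) * P.toReal := by
    have h2 := ENNReal.toReal_mono hmulfin hcount
    rw [ENNReal.toReal_mul] at h2
    simp only [ENNReal.toReal_natCast] at h2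
    push_cast at h2 ⊢
    linarith
  have hPge : 1 - α ≤ P.toReal := by
    have hpos : (0 : ℝ) < (n : ℝ) + 1 := by positivity
    nlinarith [hkreal, hkP]
  refine hPge.trans ?_
  exact ENNReal.toReal_mono (measure_ne_top _ _) hπE
end

section
/- With the conformal threshold ŝ defined as the ⌈(n+1)(1−α)⌉/n-th empirical quantile of i.i.d. continuous calibration scores, the coverage probability also satisfies the upper bound P(s_{n+1} ≤ ŝ) ≤ 1 − α + 1/(n+1). -/
open MeasureTheory ProbabilityTheory
open scoped ENNReal

namespace ConformalUB

/-- rank of coordinate `i`: number of coordinates strictly below `x i`. -/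
noncomputable def rank {m : ℕ} (x : Fin m → ℝ) (i : Fin m) : ℕ :=
  (Finset.univ.filter fun i' => x i' < x i).card

lemma measurable_rank {m : ℕ} (i : Fin m) : Measurable (fun x : Fin m → ℝ => rank x i) := by
  have h : (fun x : Fin m → ℝ => rank x i)
      = fun x => ∑ i' : Fin m, if x i' < x i then 1 else 0 := by
    funext x; simp only [rank, Finset.card_filter]
  rw [h]
  exact Finset.measurable_sum _ fun i' _ =>
    Measurable.ite (measurableSet_lt (measurable_pi_apply i') (measurable_pi_apply i))
      measurable_const measurable_const

lemma rank_comp_perm {m : ℕ} (x : Fin m → ℝ) (σ : Equiv.Perm (Fin m)) (i : Fin m) :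
    rank (fun j => x (σ j)) i = rank x (σ i) := by
  unfold rank
  exact Finset.card_bij' (fun a _ => σ a) (fun b _ => σ.symm b)
    (by intro a ha; simp at ha ⊢; exact ha)
    (by intro b hb; simp at hb ⊢; exact hb)
    (by intro a _; simp) (by intro b _; simp)

lemma rank_strictMono {m : ℕ} {x : Fin m → ℝ} {i i' : Fin m} (h : x i < x i') :
    rank x i < rank x i' := by
  apply Finset.card_lt_card
  constructor
  · intro a ha
    simp only [Finset.mem_filter] at ha ⊢
    exact ⟨ha.1, ha.2.trans h⟩
  · intro hsub
    have hi : i ∈ Finset.univ.filter fun i'' => x i'' < x i' := by simp [h]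
    have := hsub hi
    simp at this

lemma rank_injOn {m : ℕ} {x : Fin m → ℝ} (hx : Function.Injective x) :
    Function.Injective (rank x) := by
  intro i i' h
  by_contra hne
  rcases lt_or_gt_of_ne (fun hv => hne (hx hv)) with hv | hv
  · exact absurd h (Nat.ne_of_lt (rank_strictMono hv))
  · exact absurd h.symm (Nat.ne_of_lt (rank_strictMono hv))

lemma rank_lt {m : ℕ} (x : Fin m → ℝ) (i : Fin m) : rank x i < m := by
  have hsub : (Finset.univ.filter fun i' => x i' < x i) ⊆ Finset.univ.erase i := by
    intro a ha
    simp only [Finset.mem_filter] at ha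
    refine Finset.mem_erase.2 ⟨?_, Finset.mem_univ a⟩
    rintro rfl; exact lt_irrefl _ ha.2
  calc rank x i ≤ (Finset.univ.erase i).card := Finset.card_le_card hsub
    _ < m := by
      rw [Finset.card_erase_of_mem (Finset.mem_univ i)]
      simp only [Finset.card_univ, Fintype.card_fin]
      have : 0 < m := i.pos
      omega

lemma rank_surj {m : ℕ} {x : Fin m → ℝ} (hx : Function.Injective x) {j : ℕ} (hj : j < m) :
    ∃ i, rank x i = j := by
  let e : Fin m → Fin m := fun i => ⟨rank x i, rank_lt x i⟩
  have he : Function.Injective e := fun a b hab =>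
    rank_injOn hx (by simpa [e, Fin.ext_iff] using hab)
  have hs : Function.Surjective e := Finite.surjective_of_injective he
  obtain ⟨i, hi⟩ := hs ⟨j, hj⟩
  exact ⟨i, by simpa [e, Fin.ext_iff] using hi⟩

end ConformalUB

open ConformalUB

/-- **Conformal prediction coverage upper bound.**
With the conformal threshold `ŝ` defined as the `⌈(n+1)(1-α)⌉/n`-th empirical
quantile of i.i.d. atomless calibration scores `s 0, ..., s (n-1)` (and the test
score `s (Fin.last n)` i.i.d. with them), the coverage probability also satisfies
`P(s_{n+1} ≤ ŝ) ≤ 1 - α + 1/(n+1)`. -/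
theorem conformal_coverage_upper_bound
    {Ω : Type*} [MeasureSpace Ω] [IsProbabilityMeasure (ℙ : Measure Ω)]
    (n : ℕ) (hn : 0 < n) (α : ℝ) (hα : α ∈ Set.Ioo (0 : ℝ) 1)
    (s : Fin (n + 1) → Ω → ℝ) (hmeas : ∀ i, Measurable (s i))
    (μ : Measure ℝ) [NullSingletonClass μ]
    (hindep : iIndepFun s ℙ)
    (hident : ∀ i, Measure.map (s i) ℙ = μ)
    (k : ℕ) (hk : (k : ℤ) = ⌈((n : ℝ) + 1) * (1 - α)⌉) (hkn : k ≤ n)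
    (shat : Ω → ℝ)
    (hshat : ∀ ω, shat ω =
      sInf {t : ℝ | k ≤ (Finset.univ.filter
        (fun i : Fin n => s i.castSucc ω ≤ t)).card}) :
    (ℙ {ω | s (Fin.last n) ω ≤ shat ω}).toReal ≤ 1 - α + 1 / ((n : ℝ) + 1) := by
  haveI hμprob : IsProbabilityMeasure μ := by
    rw [← hident 0]; exact Measure.isProbabilityMeasure_map (hmeas 0).aemeasurable
  have hk1 : 1 ≤ k := by
    have hpos : (0 : ℝ) < ((n : ℝ) + 1) * (1 - α) := by
      have h1 := hα.1; have h2 := hα.2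
      have h3 : (0:ℝ) < 1 - α := by linarith
      positivity
    have : (0 : ℤ) < ⌈((n : ℝ) + 1) * (1 - α)⌉ := Int.ceil_pos.2 hpos
    omega
  -- joint law
  set S : Ω → (Fin (n + 1) → ℝ) := fun ω i => s i ω with hS
  have hSmeas : Measurable S := measurable_pi_lambda _ fun i => hmeas i
  set π : Measure (Fin (n + 1) → ℝ) := Measure.pi (fun _ => μ) with hπ
  haveI hπprob : IsProbabilityMeasure π := by rw [hπ]; infer_instance
  have hjoint : Measure.map S ℙ = π := by
    rw [hπ]
    refine (Measure.pi_eq (μ := fun _ : Fin (n+1) => μ) fun A hA => ?_).symm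
    rw [Measure.map_apply hSmeas (MeasurableSet.univ_pi hA)]
    have hpre : S ⁻¹' Set.pi Set.univ A = ⋂ i, s i ⁻¹' A i := by
      ext ω; simp [hS, Set.mem_pi]
    rw [hpre]
    have h := (iIndepFun_iff_measure_inter_preimage_eq_mul.mp hindep) Finset.univ
      (fun i _ => hA i)
    have h' : ℙ (⋂ i, s i ⁻¹' A i) = ∏ i : Fin (n+1), ℙ (s i ⁻¹' A i) := by simpa using h
    rw [h']
    exact Finset.prod_congr rfl fun i _ => by
      rw [← hident i, Measure.map_apply (hmeas i) (hA i)]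
  -- ties are null
  have hdiag : ∀ i j : Fin (n + 1), i ≠ j → π {x | x i = x j} = 0 := by
    intro i j hij
    have hIndep : IndepFun (s i) (s j) ℙ := hindep.indepFun hij
    have hmap : Measure.map (fun ω => (s i ω, s j ω)) ℙ = μ.prod μ := by
      have h := (indepFun_iff_map_prod_eq_prod_map_map (hmeas i).aemeasurable
        (hmeas j).aemeasurable).mp hIndep
      rwa [hident i, hident j] at h
    have hdm : MeasurableSet {p : ℝ × ℝ | p.1 = p.2} :=
      measurableSet_eq_fun measurable_fst measurable_snd
    have h0 : (μ.prod μ) {p : ℝ × ℝ | p.1 = p.2} = 0 := by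
      rw [Measure.prod_apply hdm]
      have hz : ∀ a : ℝ, μ (Prod.mk a ⁻¹' {p : ℝ × ℝ | p.1 = p.2}) = 0 := by
        intro a
        have hpre : Prod.mk a ⁻¹' {p : ℝ × ℝ | p.1 = p.2} = {a} := by
          ext y; simp [eq_comm]
        rw [hpre]; exact measure_singleton a
      simp [hz]
    have hset : MeasurableSet {x : Fin (n+1) → ℝ | x i = x j} :=
      measurableSet_eq_fun (measurable_pi_apply i) (measurable_pi_apply j)
    rw [← hjoint, Measure.map_apply hSmeas hset]
    have hpre : S ⁻¹' {x | x i = x j}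
        = (fun ω => (s i ω, s j ω)) ⁻¹' {p : ℝ × ℝ | p.1 = p.2} := by
      ext ω; simp [hS]
    rw [hpre, ← Measure.map_apply ((hmeas i).prodMk (hmeas j)) hdm, hmap, h0]
  -- non-injective points are null
  set D : Set (Fin (n + 1) → ℝ) := {x | Function.Injective x} with hD
  have hDmeas : MeasurableSet D := by
    have hDeq : D = ⋂ i, ⋂ j, ⋂ (_ : i ≠ j), {x : Fin (n+1) → ℝ | x i = x j}ᶜ := by
      ext x
      simp only [Set.mem_iInter, Set.mem_compl_iff, Set.mem_setOf_eq, hD]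
      constructor
      · intro hinj i j hij hEq; exact hij (hinj hEq)
      · intro h a b hab; by_contra hne; exact h a b hne hab
    rw [hDeq]
    exact MeasurableSet.iInter fun i => MeasurableSet.iInter fun j =>
      MeasurableSet.iInter fun _ =>
        (measurableSet_eq_fun (measurable_pi_apply i) (measurable_pi_apply j)).compl
  have hDc : π Dᶜ = 0 := by
    have hsub : Dᶜ ⊆ ⋃ i, ⋃ j, ⋃ (_ : i ≠ j), {x : Fin (n+1) → ℝ | x i = x j} := by
      intro x hx
      simp only [hD, Set.mem_compl_iff, Set.mem_setOf_eq, Function.Injective] at hx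
      push_neg at hx
      obtain ⟨a, b, hab, hne⟩ := hx
      exact Set.mem_iUnion.2 ⟨a, Set.mem_iUnion.2 ⟨b, Set.mem_iUnion.2 ⟨hne, hab⟩⟩⟩
    exact measure_mono_null hsub (measure_iUnion_null fun i => measure_iUnion_null fun j =>
      measure_iUnion_null fun hij => hdiag i j hij)
  have hDfull : π D = 1 := by
    have h := measure_add_measure_compl (μ := π) hDmeas
    rw [hDc, add_zero, measure_univ] at h
    exact h
  have hrankmeas : ∀ (i : Fin (n+1)) (j : ℕ),
      MeasurableSet {x : Fin (n+1) → ℝ | rank x i = j} :=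
    fun i j => measurable_rank i (measurableSet_singleton j)
  -- permutation invariance
  have hperm : ∀ σ : Equiv.Perm (Fin (n+1)),
      Measure.map (fun x (i : Fin (n+1)) => x (σ i)) π = π := by
    intro σ
    have h := Measure.pi_map_piCongrLeft (σ.symm) (fun _ : Fin (n+1) => μ)
    have hfun : ⇑(MeasurableEquiv.piCongrLeft (fun _ : Fin (n+1) => ℝ) σ.symm)
        = fun x (i : Fin (n+1)) => x (σ i) := by
      funext x i
      have h1 := MeasurableEquiv.piCongrLeft_apply_apply (β := fun _ : Fin (n+1) => ℝ)
        σ.symm x (σ i)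
      simpa using h1
    rw [hπ]
    rw [hfun] at h
    exact h
  have hrank_eq : ∀ (i : Fin (n+1)) (j : ℕ),
      π {x | rank x i = j} = π {x | rank x (Fin.last n) = j} := by
    intro i j
    set σ : Equiv.Perm (Fin (n+1)) := Equiv.swap i (Fin.last n) with hσ
    calc π {x | rank x i = j}
        = (Measure.map (fun x (i' : Fin (n+1)) => x (σ i')) π) {x | rank x i = j} := by
          rw [hperm σ]
      _ = π ((fun x (i' : Fin (n+1)) => x (σ i')) ⁻¹' {x | rank x i = j}) := by
          exact Measure.map_apply
            (measurable_pi_lambda _ fun i' => measurable_pi_apply (σ i')) (hrankmeas i j)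
      _ = π {x | rank x (Fin.last n) = j} := by
          congr 1
          ext x
          simp only [Set.mem_preimage, Set.mem_setOf_eq]
          rw [rank_comp_perm x σ i, hσ, Equiv.swap_apply_left]
  -- rank value probabilities
  have hrank_prob : ∀ j : ℕ, j < n + 1 →
      π {x | rank x (Fin.last n) = j} = ((n : ℝ≥0∞) + 1)⁻¹ := by
    intro j hj
    have hsum : ∑ i : Fin (n+1), π {x | rank x i = j} = 1 := by
      calc ∑ i : Fin (n+1), π {x | rank x i = j}
          = ∑ i : Fin (n+1), π ({x | rank x i = j} ∩ D) :=
            Finset.sum_congr rfl fun i _ => (measure_inter_conull hDc).symm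
        _ = π (⋃ i : Fin (n+1), ({x | rank x i = j} ∩ D)) := by
            have hd : Pairwise (Function.onFun Disjoint fun i : Fin (n+1) => {x | rank x i = j} ∩ D) := by
              intro a b hab
              simp only [Function.onFun, Set.disjoint_left]
              rintro x ⟨hra, hxD⟩ ⟨hrb, -⟩
              exact hab (rank_injOn hxD (hra.trans hrb.symm))
            rw [measure_iUnion hd (fun i => (hrankmeas i j).inter hDmeas), tsum_fintype]
        _ = π D := by
            congr 1
            ext x
            simp only [Set.mem_iUnion, Set.mem_inter_iff, Set.mem_setOf_eq]
            constructor
            · rintro ⟨i, _, hxD⟩; exact hxD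
            · intro hxD
              obtain ⟨i, hi⟩ := rank_surj hxD hj
              exact ⟨i, hi, hxD⟩
        _ = 1 := hDfull
    rw [Finset.sum_congr rfl (fun i _ => hrank_eq i j), Finset.sum_const, Finset.card_univ,
      Fintype.card_fin, nsmul_eq_mul] at hsum
    have hne : ((n : ℝ≥0∞) + 1) ≠ 0 := by
      simp
    have hnt : ((n : ℝ≥0∞) + 1) ≠ ⊤ := by
      exact_mod_cast ENNReal.natCast_ne_top (n+1)
    have hsum' : ((n : ℝ≥0∞) + 1) * π {x | rank x (Fin.last n) = j} = 1 := by
      rw [show ((n : ℝ≥0∞) + 1) = ((n + 1 : ℕ) : ℝ≥0∞) by push_cast; ring]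
      exact hsum
    have h2 : ((n:ℝ≥0∞)+1)⁻¹ * (((n:ℝ≥0∞)+1) * π {x | rank x (Fin.last n) = j})
        = ((n:ℝ≥0∞)+1)⁻¹ * 1 := by rw [hsum']
    rwa [← mul_assoc, ENNReal.inv_mul_cancel hne hnt, one_mul, mul_one] at h2
  -- key pointwise inclusion
  have hmeasB : MeasurableSet {x : Fin (n+1) → ℝ | rank x (Fin.last n) < k} :=
    measurable_rank (Fin.last n) (MeasurableSet.of_discrete (s := Set.Iio k))
  haveI hNe : Nonempty (Fin n) := Fin.pos_iff_nonempty.mp hn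
  have hkey : {ω | s (Fin.last n) ω ≤ shat ω}
      ⊆ S ⁻¹' {x | rank x (Fin.last n) < k} := by
    intro ω hω
    simp only [Set.mem_setOf_eq] at hω
    simp only [Set.mem_preimage, Set.mem_setOf_eq]
    -- rank expressed over Fin n
    have hrankcard : rank (S ω) (Fin.last n)
        = (Finset.univ.filter fun i : Fin n => s i.castSucc ω < s (Fin.last n) ω).card := by
      unfold rank
      symm
      refine Finset.card_bij (fun (a : Fin n) _ => a.castSucc) ?_ ?_ ?_
      · intro a ha
        simp only [Finset.mem_filter, hS, Finset.mem_univ, true_and] at ha ⊢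
        exact ha
      · intro a _ a' _ h
        exact Fin.castSucc_injective n h
      · intro b hb
        simp only [Finset.mem_filter, hS, Finset.mem_univ, true_and] at hb
        have hbne : b ≠ Fin.last n := by
          rintro rfl; exact lt_irrefl _ hb
        have hblt : (b : ℕ) < n := by
          have := Fin.lt_last_iff_ne_last.mpr hbne
          exact this
        refine ⟨⟨(b : ℕ), hblt⟩, Finset.mem_filter.2 ⟨Finset.mem_univ _, ?_⟩, ?_⟩
        · simpa [hS, Fin.castSucc] using hb
        · ext; simp
    by_contra hge
    push_neg at hge
    rw [hrankcard] at hge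
    set F := Finset.univ.filter fun i : Fin n => s i.castSucc ω < s (Fin.last n) ω with hF
    have hFne : F.Nonempty := Finset.card_pos.mp (lt_of_lt_of_le hk1 hge)
    set V := F.image fun i => s i.castSucc ω with hV
    have hVne : V.Nonempty := hFne.image _
    have ht0lt : V.max' hVne < s (Fin.last n) ω := by
      obtain ⟨i, hiF, hival⟩ := Finset.mem_image.mp (V.max'_mem hVne)
      rw [← hival]
      exact (Finset.mem_filter.mp hiF).2
    have hFle : ∀ i ∈ F, s i.castSucc ω ≤ V.max' hVne := fun i hi =>
      Finset.le_max' V _ (Finset.mem_image_of_mem _ hi)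
    set T := {t : ℝ | k ≤ (Finset.univ.filter
        (fun i : Fin n => s i.castSucc ω ≤ t)).card} with hT
    have ht0T : V.max' hVne ∈ T := by
      refine le_trans hge (Finset.card_le_card ?_)
      intro i hi
      simp only [Finset.mem_filter, Finset.mem_univ, true_and]
      exact hFle i hi
    have hbdd : BddBelow T := by
      refine ⟨(Finset.univ.image fun i : Fin n => s i.castSucc ω).min'
        (Finset.univ_nonempty.image _), ?_⟩
      intro t ht
      simp only [hT, Set.mem_setOf_eq] at ht
      have hne' : (Finset.univ.filter fun i : Fin n => s i.castSucc ω ≤ t).Nonempty :=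
        Finset.card_pos.mp (lt_of_lt_of_le hk1 ht)
      obtain ⟨i, hi⟩ := hne'
      have hle := (Finset.mem_filter.mp hi).2
      exact le_trans (Finset.min'_le _ _ (Finset.mem_image_of_mem _ (Finset.mem_univ i))) hle
    have hfin : shat ω ≤ V.max' hVne := by
      rw [hshat ω]
      exact csInf_le hbdd ht0T
    linarith
  -- assemble
  have hbound : ℙ {ω | s (Fin.last n) ω ≤ shat ω}
      ≤ (k : ℝ≥0∞) * ((n : ℝ≥0∞) + 1)⁻¹ := by
    have hπB : π {x | rank x (Fin.last n) < k} ≤ (k : ℝ≥0∞) * ((n : ℝ≥0∞) + 1)⁻¹ := by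
      have hBeq : {x : Fin (n+1) → ℝ | rank x (Fin.last n) < k}
          = ⋃ j : Fin k, {x | rank x (Fin.last n) = (j : ℕ)} := by
        ext x
        simp only [Set.mem_setOf_eq, Set.mem_iUnion]
        constructor
        · intro h; exact ⟨⟨_, h⟩, rfl⟩
        · rintro ⟨j, hj⟩; rw [hj]; exact j.2
      rw [hBeq]
      refine le_trans (measure_iUnion_fintype_le _ _) ?_
      have heach : ∀ j : Fin k, π {x | rank x (Fin.last n) = (j : ℕ)}
          = ((n : ℝ≥0∞) + 1)⁻¹ := fun j => hrank_prob j (by omega)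
      rw [Finset.sum_congr rfl fun j _ => heach j, Finset.sum_const, Finset.card_univ,
        Fintype.card_fin, nsmul_eq_mul]
    calc ℙ {ω | s (Fin.last n) ω ≤ shat ω}
        ≤ ℙ (S ⁻¹' {x | rank x (Fin.last n) < k}) := measure_mono hkey
      _ = π {x | rank x (Fin.last n) < k} := by
          rw [← hjoint, Measure.map_apply hSmeas hmeasB]
      _ ≤ _ := hπB
  have hrhs_ne : (k : ℝ≥0∞) * ((n : ℝ≥0∞) + 1)⁻¹ ≠ ⊤ := by
    refine ENNReal.mul_ne_top (ENNReal.natCast_ne_top k) ?_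
    exact ENNReal.inv_ne_top.mpr (by simp)
  have htoReal : (ℙ {ω | s (Fin.last n) ω ≤ shat ω}).toReal
      ≤ (k : ℝ) / ((n : ℝ) + 1) := by
    have h := ENNReal.toReal_mono hrhs_ne hbound
    have hconv : ((k : ℝ≥0∞) * ((n : ℝ≥0∞) + 1)⁻¹).toReal = (k : ℝ) / ((n : ℝ) + 1) := by
      rw [ENNReal.toReal_mul, ENNReal.toReal_inv,
        ENNReal.toReal_add (ENNReal.natCast_ne_top n) ENNReal.one_ne_top,
        ENNReal.toReal_natCast, ENNReal.toReal_natCast, ENNReal.toReal_one, div_eq_mul_inv]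
    rwa [hconv] at h
  refine le_trans htoReal ?_
  have hnpos : (0:ℝ) < (n : ℝ) + 1 := by positivity
  have hceil : (k : ℝ) ≤ ((n : ℝ) + 1) * (1 - α) + 1 := by
    have h1 : ((k : ℤ) : ℝ) = ((⌈((n : ℝ) + 1) * (1 - α)⌉ : ℤ) : ℝ) := by exact_mod_cast hk
    have h2 := Int.ceil_lt_add_one (((n : ℝ) + 1) * (1 - α))
    push_cast at h1
    linarith
  rw [div_le_iff₀ hnpos]
  have hfs : (1 - α + 1 / ((n : ℝ) + 1)) * ((n : ℝ) + 1) = ((n : ℝ) + 1) * (1 - α) + 1 := by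
    field_simp
  rw [hfs]
  exact hceil
end
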